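/- Let A be an m×n real matrix and B, C ∈ ℝ^m, with Q^ε = {x : Ax ≥ B + εC}, and assume Q^0 is nonempty, bounded, and full-dimensional. Then there exist finitely many real numbers 0 = α₀ < α₁ < ⋯ < α_N (with possibly α_N = sup{ε ≥ 0 : Q^ε ≠ ∅} when finite) such that on each open interval (α_j, α_{j+1}) the set of indices i ∈ {1,…,m} for which the constraint (Ax)_i ≥ B_i + εC_i defines a facet of Q^ε is constant. -/

import Mathlib

open Module Set

variable {n : ℕ}

-- finrank of any submodule of ℝ^n is ≤ n
lemma aux_dim_le (p : Submodule ℝ (Fin n → ℝ)) : finrank ℝ p ≤ n := by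
  simpa [Module.finrank_fin_fun] using Submodule.finrank_le p

lemma aux_vectorSpan_empty_dim : finrank ℝ (vectorSpan ℝ (∅ : Set (Fin n → ℝ))) = 0 := by
  rw [vectorSpan_empty]; exact finrank_bot ℝ _

lemma aux_nonempty_of_dim_ne (s : Set (Fin n → ℝ)) (h : finrank ℝ (vectorSpan ℝ s) ≠ 0) :
    s.Nonempty := by
  rcases s.eq_empty_or_nonempty with rfl | h'
  · exact absurd aux_vectorSpan_empty_dim h
  · exact h'

-- full dimension from nonempty interior
lemma aux_fulldim (s : Set (Fin n → ℝ)) (h : (interior s).Nonempty) :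
    finrank ℝ (vectorSpan ℝ s) = n := by
  have h2 : (interior (convexHull ℝ s)).Nonempty :=
    h.mono (interior_mono (subset_convexHull ℝ s))
  have := affineSpan_eq_top_of_nonempty_interior h2
  rw [AffineSubspace.vectorSpan_eq_top_of_affineSpan_eq_top (k := ℝ) (V := Fin n → ℝ) (P := Fin n → ℝ) this, finrank_top, Module.finrank_fin_fun]

-- homothety preserves dimension of vectorSpan
lemma aux_homothety_dim (t : ℝ) (ht : t ≠ 0) (c : Fin n → ℝ) (s : Set (Fin n → ℝ)) :
    finrank ℝ (vectorSpan ℝ ((fun x => t • x + c) '' s)) = finrank ℝ (vectorSpan ℝ s) := by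
  set e : (Fin n → ℝ) ≃ₗ[ℝ] (Fin n → ℝ) := LinearEquiv.smulOfNeZero ℝ _ t ht with he
  have key : vectorSpan ℝ ((fun x => t • x + c) '' s) = (vectorSpan ℝ s).map (e : _ →ₗ[ℝ] _) := by
    rw [vectorSpan_def, vectorSpan_def, ← Submodule.span_image]
    congr 1
    ext v
    constructor
    · rintro ⟨a, ⟨x, hx, rfl⟩, b, ⟨y, hy, rfl⟩, rfl⟩
      exact ⟨x - y, ⟨x, hx, y, hy, rfl⟩, by simp [he, smul_sub]⟩
    · rintro ⟨w, ⟨x, hx, y, hy, rfl⟩, rfl⟩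
      refine ⟨t • x + c, ⟨x, hx, rfl⟩, t • y + c, ⟨y, hy, rfl⟩, ?_⟩
      simp [he, smul_sub]
  rw [key, LinearEquiv.finrank_map_eq]

-- dimension lower bound from a homothety embedding
lemma aux_dim_le_of_maps (t : ℝ) (ht : t ≠ 0) (c : Fin n → ℝ) (s s₂ : Set (Fin n → ℝ))
    (h : ∀ x ∈ s, t • x + c ∈ s₂) :
    finrank ℝ (vectorSpan ℝ s) ≤ finrank ℝ (vectorSpan ℝ s₂) := by
  rw [← aux_homothety_dim t ht c s]
  exact Submodule.finrank_mono (vectorSpan_mono ℝ (by rintro _ ⟨x, hx, rfl⟩; exact h x hx))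

-- subset of affine hyperplane has dim ≤ n-1
lemma aux_hyperplane_dim (f : (Fin n → ℝ) →ₗ[ℝ] ℝ) (hf : f ≠ 0) (r : ℝ)
    (s : Set (Fin n → ℝ)) (hs : ∀ x ∈ s, f x = r) :
    finrank ℝ (vectorSpan ℝ s) ≤ n - 1 := by
  have hle : vectorSpan ℝ s ≤ LinearMap.ker f := by
    rw [vectorSpan_def, Submodule.span_le]
    rintro v ⟨x, hx, y, hy, rfl⟩
    simp [LinearMap.mem_ker, vsub_eq_sub, map_sub, hs x hx, hs y hy]
  have hker : finrank ℝ (LinearMap.ker f) = n - 1 := by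
    have h1 := LinearMap.finrank_range_add_finrank_ker f
    have h2 : LinearMap.range f = ⊤ := by
      obtain ⟨x, hx⟩ : ∃ x, f x ≠ 0 := by
        by_contra hc; push_neg at hc
        exact hf (LinearMap.ext fun x => by simp [hc x])
      exact LinearMap.range_eq_top.mpr fun y =>
        ⟨(y / f x) • x, by simp [map_smul, div_mul_cancel₀ _ hx]⟩
    rw [h2, finrank_top, Module.finrank_self, Module.finrank_fin_fun] at h1
    omega
  exact hker ▸ Submodule.finrank_mono hle



def Qset {m n : ℕ} (A : Matrix (Fin m) (Fin n) ℝ) (B C : Fin m → ℝ) (ε : ℝ) :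
    Set (Fin n → ℝ) := {x | B + ε • C ≤ A.mulVec x}

def Fset {m n : ℕ} (A : Matrix (Fin m) (Fin n) ℝ) (B C : Fin m → ℝ) (i : Fin m) (ε : ℝ) :
    Set (Fin n → ℝ) := Qset A B C ε ∩ {x | A.mulVec x i = B i + ε * C i}

lemma aux_compQ {m n : ℕ} (A : Matrix (Fin m) (Fin n) ℝ) (B C : Fin m → ℝ)
    {ε₁ ε₂ t : ℝ} (ht0 : 0 ≤ t) (ht1 : t ≤ 1) {x₁ x₂ : Fin n → ℝ}
    (h1 : x₁ ∈ Qset A B C ε₁) (h2 : x₂ ∈ Qset A B C ε₂) :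
    t • x₁ + (1 - t) • x₂ ∈ Qset A B C (t * ε₁ + (1 - t) * ε₂) := by
  rw [Qset, Set.mem_setOf_eq, Pi.le_def]
  intro k
  have e1 := h1 k
  have e2 := h2 k
  simp only [Pi.add_apply, Pi.smul_apply, smul_eq_mul] at e1 e2 ⊢
  rw [Matrix.mulVec_add, Matrix.mulVec_smul, Matrix.mulVec_smul]
  simp only [Pi.add_apply, Pi.smul_apply, smul_eq_mul]
  nlinarith [mul_le_mul_of_nonneg_left e1 ht0,
    mul_le_mul_of_nonneg_left e2 (by linarith : (0:ℝ) ≤ 1 - t)]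

lemma aux_compF {m n : ℕ} (A : Matrix (Fin m) (Fin n) ℝ) (B C : Fin m → ℝ) (i : Fin m)
    {ε₁ ε₂ t : ℝ} (ht0 : 0 ≤ t) (ht1 : t ≤ 1) {x₁ x₂ : Fin n → ℝ}
    (h1 : x₁ ∈ Fset A B C i ε₁) (h2 : x₂ ∈ Fset A B C i ε₂) :
    t • x₁ + (1 - t) • x₂ ∈ Fset A B C i (t * ε₁ + (1 - t) * ε₂) := by
  refine ⟨aux_compQ A B C ht0 ht1 h1.1 h2.1, ?_⟩
  have e1 := h1.2
  have e2 := h2.2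
  simp only [Set.mem_setOf_eq] at e1 e2 ⊢
  rw [Matrix.mulVec_add, Matrix.mulVec_smul, Matrix.mulVec_smul]
  simp only [Pi.add_apply, Pi.smul_apply, smul_eq_mul, e1, e2]
  ring


section
variable {m n : ℕ} (A : Matrix (Fin m) (Fin n) ℝ) (B C : Fin m → ℝ)

lemma aux_key (hQ0 : finrank ℝ (vectorSpan ℝ (Qset A B C 0)) = n)
    (i : Fin m) (hrow : (∃ j, A i j ≠ 0) ∨ C i = 0)
    {ε₁ ε ε₂ : ℝ} (hε₁ : 0 ≤ ε₁) (h1 : ε₁ < ε) (h2 : ε < ε₂)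
    (hf1 : finrank ℝ (vectorSpan ℝ (Fset A B C i ε₁)) = n - 1)
    (hf2 : finrank ℝ (vectorSpan ℝ (Fset A B C i ε₂)) = n - 1) :
    finrank ℝ (vectorSpan ℝ (Fset A B C i ε)) = n - 1 := by
  have h12 : ε₁ < ε₂ := h1.trans h2
  set t : ℝ := (ε₂ - ε) / (ε₂ - ε₁) with htdef
  have hden : (0:ℝ) < ε₂ - ε₁ := by linarith
  have ht0 : 0 < t := div_pos (by linarith) hden
  have ht1 : t < 1 := (div_lt_one hden).mpr (by linarith)
  have hcomb : t * ε₁ + (1 - t) * ε₂ = ε := by rw [htdef]; field_simp; ring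
  -- lower bound when both endpoint faces are nonempty
  have lower : (Fset A B C i ε₁).Nonempty → (Fset A B C i ε₂).Nonempty →
      n - 1 ≤ finrank ℝ (vectorSpan ℝ (Fset A B C i ε)) := by
    rintro _ ⟨y, hy⟩
    rw [← hf1]
    refine aux_dim_le_of_maps t ht0.ne' ((1 - t) • y) _ _ fun x hx => ?_
    have := aux_compF A B C i ht0.le ht1.le hx hy
    rwa [hcomb] at this
  by_cases hA : ∃ j, A i j ≠ 0
  · -- nonzero row: face lies in a genuine hyperplane
    obtain ⟨j, hj⟩ := hA
    set f : (Fin n → ℝ) →ₗ[ℝ] ℝ := (LinearMap.proj i).comp A.mulVecLin with hfdef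
    have hfx : ∀ x, f x = A.mulVec x i := fun x => rfl
    have hf : f ≠ 0 := by
      intro hc
      have := congrArg (fun g => g (Pi.single j 1)) hc
      simp only [hfx, LinearMap.zero_apply] at this
      rw [Matrix.mulVec_single] at this
      simp at this
      exact hj this
    have upper : ∀ δ : ℝ, finrank ℝ (vectorSpan ℝ (Fset A B C i δ)) ≤ n - 1 := fun δ =>
      aux_hyperplane_dim f hf (B i + δ * C i) _ fun x hx => hx.2
    refine le_antisymm (upper ε) ?_
    by_cases hne : (Fset A B C i ε₁).Nonempty ∧ (Fset A B C i ε₂).Nonempty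
    · exact lower hne.1 hne.2
    · -- some endpoint face is empty, so n - 1 = 0
      have hz : n - 1 = 0 := by
        rcases not_and_or.mp hne with h | h <;>
          [ (rw [Set.not_nonempty_iff_eq_empty.mp h, aux_vectorSpan_empty_dim] at hf1;
              omega);
            (rw [Set.not_nonempty_iff_eq_empty.mp h, aux_vectorSpan_empty_dim] at hf2;
              omega)]
      omega
  · -- zero row
    have hC : C i = 0 := hrow.resolve_left hA
    push_neg at hA
    have hz : ∀ x : Fin n → ℝ, A.mulVec x i = 0 := fun x => by
      simp [Matrix.mulVec, dotProduct, hA]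
    by_cases hB : B i = 0
    · have hFQ : ∀ δ : ℝ, Fset A B C i δ = Qset A B C δ := fun δ => by
        ext x
        simp [Fset, hz, hB, hC]
      rw [hFQ] at hf1 hf2 ⊢
      rcases Nat.eq_zero_or_pos n with hn | hn
      · have := aux_dim_le (vectorSpan ℝ (Qset A B C ε))
        omega
      have hε : 0 < ε := lt_of_le_of_lt hε₁ h1
      refine le_antisymm ?_ ?_
      · -- dim Q ε ≤ n - 1
        by_contra hcon
        push_neg at hcon
        have hdimle := aux_dim_le (vectorSpan ℝ (Qset A B C ε))
        have hdim : finrank ℝ (vectorSpan ℝ (Qset A B C ε)) = n := by omega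
        have hQne : (Qset A B C ε).Nonempty := aux_nonempty_of_dim_ne _ (by omega)
        obtain ⟨y, hy⟩ := hQne
        set s : ℝ := (ε - ε₁) / ε with hsdef
        have hs0 : 0 < s := div_pos (by linarith) hε
        have hs1 : s ≤ 1 := by
          rw [div_le_one hε]; linarith
        have hmap : ∀ x ∈ Qset A B C 0, s • x + (1 - s) • y ∈ Qset A B C ε₁ := by
          intro x hx
          have := aux_compQ A B C hs0.le hs1 hx hy
          have harith : s * 0 + (1 - s) * ε = ε₁ := by rw [hsdef]; field_simp; ring
          rwa [harith] at this
        have := aux_dim_le_of_maps s hs0.ne' ((1 - s) • y) _ _ hmap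
        rw [hQ0, hf1] at this
        omega
      · -- n - 1 ≤ dim Q ε
        rcases Nat.lt_or_ge n 2 with h2' | h2'
        · have : n - 1 = 0 := by omega
          rw [this]; exact Nat.zero_le _
        · have hlow := lower (by rw [hFQ]; exact aux_nonempty_of_dim_ne _ (by omega))
            (by rw [hFQ]; exact aux_nonempty_of_dim_ne _ (by omega))
          rwa [hFQ] at hlow
    · -- B i ≠ 0 : faces always empty
      have hF : ∀ δ : ℝ, Fset A B C i δ = (∅ : Set (Fin n → ℝ)) := fun δ => by
        ext x
        simp only [Fset, Set.mem_inter_iff, Set.mem_setOf_eq, hz, hC, mul_zero, add_zero,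
          Set.mem_empty_iff_false, iff_false, not_and]
        exact fun _ h => hB h.symm
      rw [hF] at hf1 ⊢
      exact hf1
end

theorem stmt_17 (m n : ℕ) (A : Matrix (Fin m) (Fin n) ℝ) (B C : Fin m → ℝ)
    (hne : {x : Fin n → ℝ | B ≤ A.mulVec x}.Nonempty)
    (hbdd : Bornology.IsBounded {x : Fin n → ℝ | B ≤ A.mulVec x})
    (hfull : (interior {x : Fin n → ℝ | B ≤ A.mulVec x}).Nonempty) :
    let Q : ℝ → Set (Fin n → ℝ) := fun ε => {x | B + ε • C ≤ A.mulVec x}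
    let facets : ℝ → Set (Fin m) := fun ε =>
      {i | Module.finrank ℝ
        (vectorSpan ℝ (Q ε ∩ {x | A.mulVec x i = B i + ε * C i})) = n - 1}
    ∃ (N : ℕ) (α : ℕ → ℝ),
      α 0 = 0 ∧
      (∀ j < N, α j < α (j + 1)) ∧
      (∀ j < N, ∀ ε₁ ∈ Set.Ioo (α j) (α (j + 1)),
        ∀ ε₂ ∈ Set.Ioo (α j) (α (j + 1)), facets ε₁ = facets ε₂) ∧
      (BddAbove {ε : ℝ | 0 ≤ ε ∧ (Q ε).Nonempty} →
        α N = sSup {ε : ℝ | 0 ≤ ε ∧ (Q ε).Nonempty}) := by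
  intro Q facets
  by_cases hbE : BddAbove {ε : ℝ | 0 ≤ ε ∧ (Q ε).Nonempty}
  swap
  · exact ⟨0, fun _ => 0, rfl, fun j hj => absurd hj (Nat.not_lt_zero j),
      fun j hj => absurd hj (Nat.not_lt_zero j), fun h => absurd h hbE⟩
  · set S : ℝ := sSup {ε : ℝ | 0 ≤ ε ∧ (Q ε).Nonempty} with hSdef
    have hQ0eq : Qset A B C 0 = {x : Fin n → ℝ | B ≤ A.mulVec x} := by
      simp [Qset]
    have h0E : (0:ℝ) ∈ {ε : ℝ | 0 ≤ ε ∧ (Q ε).Nonempty} := by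
      refine ⟨le_refl 0, ?_⟩
      show (Qset A B C 0).Nonempty
      rw [hQ0eq]; exact hne
    have hS0 : (0:ℝ) ≤ S := le_csSup hbE h0E
    have hQ0dim : finrank ℝ (vectorSpan ℝ (Qset A B C 0)) = n := by
      rw [hQ0eq]; exact aux_fulldim _ hfull
    -- the face-dimension sets
    set W : Fin m → Set ℝ := fun i =>
      {ε : ℝ | finrank ℝ (vectorSpan ℝ (Fset A B C i ε)) = n - 1} ∩ Set.Icc 0 S with hWdef
    have hWbddA : ∀ i, BddAbove (W i) := fun i => ⟨S, fun x hx => hx.2.2⟩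
    have hWbddB : ∀ i, BddBelow (W i) := fun i => ⟨0, fun x hx => hx.2.1⟩
    -- clipping
    set clip : ℝ → ℝ := fun x => max 0 (min S x) with hclipdef
    have hclip0 : ∀ x, 0 ≤ clip x := fun x => le_max_left _ _
    have hclipS : ∀ x, clip x ≤ S := fun x => max_le hS0 (min_le_left _ _)
    have hclip_id : ∀ x, 0 ≤ x → x ≤ S → clip x = x := fun x h0 h1 => by
      rw [hclipdef]; simp only [min_eq_right h1, max_eq_right h0]
    -- breakpoints
    set T : Finset ℝ := insert 0 (insert S
      ((Finset.univ.image fun i : Fin m => clip (-B i / C i)) ∪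
       (Finset.univ.image fun i : Fin m => clip (sInf (W i))) ∪
       (Finset.univ.image fun i : Fin m => clip (sSup (W i))))) with hTdef
    have h0T : (0:ℝ) ∈ T := Finset.mem_insert_self 0 _
    have hST : S ∈ T := Finset.mem_insert_of_mem (Finset.mem_insert_self S _)
    have hrT : ∀ i : Fin m, clip (-B i / C i) ∈ T := fun i =>
      Finset.mem_insert_of_mem (Finset.mem_insert_of_mem (Finset.mem_union_left _
        (Finset.mem_union_left _ (Finset.mem_image_of_mem _ (Finset.mem_univ i)))))
    have hiT : ∀ i : Fin m, clip (sInf (W i)) ∈ T := fun i =>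
      Finset.mem_insert_of_mem (Finset.mem_insert_of_mem (Finset.mem_union_left _
        (Finset.mem_union_right _ (Finset.mem_image_of_mem _ (Finset.mem_univ i)))))
    have hsT : ∀ i : Fin m, clip (sSup (W i)) ∈ T := fun i =>
      Finset.mem_insert_of_mem (Finset.mem_insert_of_mem (Finset.mem_union_right _
        (Finset.mem_image_of_mem _ (Finset.mem_univ i))))
    have hTbounds : ∀ x ∈ T, 0 ≤ x ∧ x ≤ S := by
      intro x hx
      rw [hTdef] at hx
      rcases Finset.mem_insert.mp hx with rfl | hx
      · exact ⟨le_refl 0, hS0⟩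
      rcases Finset.mem_insert.mp hx with rfl | hx
      · exact ⟨hS0, le_refl _⟩
      rcases Finset.mem_union.mp hx with hx | hx
      · rcases Finset.mem_union.mp hx with hx | hx <;>
        · obtain ⟨i, _, rfl⟩ := Finset.mem_image.mp hx
          exact ⟨hclip0 _, hclipS _⟩
      · obtain ⟨i, _, rfl⟩ := Finset.mem_image.mp hx
        exact ⟨hclip0 _, hclipS _⟩
    -- sorted list
    set L : List ℝ := T.sort (· ≤ ·) with hLdef
    have hmemL : ∀ x, x ∈ L ↔ x ∈ T := fun x => Finset.mem_sort _
    have hLsort : L.Pairwise (· < ·) := (Finset.sortedLT_sort T).pairwise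
    have hLlen : 1 ≤ L.length := by
      have h1 : L ≠ [] := List.ne_nil_of_mem ((hmemL 0).mpr h0T)
      have := List.length_pos_iff.mpr h1
      omega
    set N : ℕ := L.length - 1 with hNdef
    set α : ℕ → ℝ := fun j => L.getD j 0 with hαdef
    have hget : ∀ {j : ℕ} (h : j < L.length), α j = L.get ⟨j, h⟩ := by
      intro j h
      rw [hαdef]
      simp [List.getD_eq_getElem?_getD, h] -- deprecated ok
    have hstrict : ∀ {a b : ℕ}, a < b → b < L.length → α a < α b := by
      intro a b hab hb
      rw [hget (lt_trans hab hb), hget hb]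
      exact hLsort.rel_get_of_lt (by simpa using hab)
    have hmono : ∀ {a b : ℕ}, a ≤ b → b < L.length → α a ≤ α b := by
      intro a b hab hb
      rcases eq_or_lt_of_le hab with rfl | h
      · exact le_refl _
      · exact (hstrict h hb).le
    have hαmemT : ∀ {j : ℕ}, j < L.length → α j ∈ T := by
      intro j h
      rw [hget h]
      exact (hmemL _).mp (L.get_mem ⟨j, h⟩)
    have hTval : ∀ x ∈ T, ∃ k, ∃ h : k < L.length, α k = x := by
      intro x hx
      obtain ⟨⟨k, hk⟩, hkx⟩ := List.mem_iff_get.mp ((hmemL x).mpr hx)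
      exact ⟨k, hk, by rw [hget hk, hkx]⟩
    have hNlen : N < L.length := by omega
    have hα0 : α 0 = 0 := by
      obtain ⟨k, hk, hkx⟩ := hTval 0 h0T
      have h1 : α 0 ≤ α k := hmono (Nat.zero_le k) hk
      have h2 := (hTbounds _ (hαmemT (by omega : 0 < L.length))).1
      rw [hkx] at h1
      linarith
    have hαN : α N = S := by
      obtain ⟨k, hk, hkx⟩ := hTval S hST
      have h1 : α k ≤ α N := hmono (by omega) hNlen
      have h2 := (hTbounds _ (hαmemT hNlen)).2
      rw [hkx] at h1
      linarith
    refine ⟨N, α, hα0, fun j hj => hstrict (Nat.lt_succ_self j) (by omega), ?_, fun _ => hαN⟩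
    -- constancy on each gap
    intro j hj ε₁ hε₁ ε₂ hε₂
    have hjlen : j + 1 < L.length := by omega
    have hgap_lb : 0 ≤ α j := by
      rw [← hα0]; exact hmono (Nat.zero_le j) (by omega)
    have hgap_ub : α (j+1) ≤ S := by
      rw [← hαN]; exact hmono (by omega) hNlen
    have hnotgap : ∀ x ∈ T, x ∉ Set.Ioo (α j) (α (j+1)) := by
      intro x hx hmem
      obtain ⟨k, hk, rfl⟩ := hTval x hx
      rcases Nat.lt_or_ge k (j+1) with h | h
      · exact absurd hmem.1 (not_lt.mpr (hmono (by omega) (by omega)))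
      · exact absurd hmem.2 (not_lt.mpr (hmono h hk))
    have main : ∀ a b, a ∈ Set.Ioo (α j) (α (j+1)) → b ∈ Set.Ioo (α j) (α (j+1)) →
        ∀ i : Fin m, finrank ℝ (vectorSpan ℝ (Fset A B C i a)) = n - 1 →
          finrank ℝ (vectorSpan ℝ (Fset A B C i b)) = n - 1 := by
      intro a b ha hb i hfa
      have ha0 : 0 < a := lt_of_le_of_lt hgap_lb ha.1
      have haS : a < S := lt_of_lt_of_le ha.2 hgap_ub
      have hb0 : 0 < b := lt_of_le_of_lt hgap_lb hb.1
      have hbS : b < S := lt_of_lt_of_le hb.2 hgap_ub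
      rcases eq_or_ne a b with rfl | hab
      · exact hfa
      by_cases hrow : (∃ jj, A i jj ≠ 0) ∨ C i = 0
      · -- "convex" rows
        have haW : a ∈ W i := ⟨hfa, ha0.le, haS.le⟩
        have hWne : (W i).Nonempty := ⟨a, haW⟩
        have hInf_mem : sInf (W i) ∈ T := by
          have h0 : 0 ≤ sInf (W i) := le_csInf hWne fun x hx => hx.2.1
          have h1 : sInf (W i) ≤ S := le_trans (csInf_le (hWbddB i) haW) haS.le
          rw [← hclip_id _ h0 h1]; exact hiT i
        have hSup_mem : sSup (W i) ∈ T := by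
          have h0 : 0 ≤ sSup (W i) := le_trans ha0.le (le_csSup (hWbddA i) haW)
          have h1 : sSup (W i) ≤ S := csSup_le hWne fun x hx => hx.2.2
          rw [← hclip_id _ h0 h1]; exact hsT i
        rcases lt_or_gt_of_ne hab with hlt | hgt
        · -- a < b : use sSup
          have hd1 : α j < sSup (W i) := lt_of_lt_of_le ha.1 (le_csSup (hWbddA i) haW)
          have hd2 : α (j+1) ≤ sSup (W i) := by
            by_contra hcon
            push_neg at hcon
            exact hnotgap _ hSup_mem ⟨hd1, hcon⟩
          obtain ⟨w, hwW, hbw⟩ := exists_lt_of_lt_csSup hWne (lt_of_lt_of_le hb.2 hd2)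
          exact aux_key A B C hQ0dim i hrow ha0.le hlt hbw hfa hwW.1
        · -- b < a : use sInf
          have hc1 : sInf (W i) < α (j+1) := lt_of_le_of_lt (csInf_le (hWbddB i) haW) ha.2
          have hc2 : sInf (W i) ≤ α j := by
            by_contra hcon
            push_neg at hcon
            exact hnotgap _ hInf_mem ⟨hcon, hc1⟩
          obtain ⟨w, hwW, hwb⟩ := exists_lt_of_csInf_lt hWne (lt_of_le_of_lt hc2 hb.1)
          exact aux_key A B C hQ0dim i hrow hwW.2.1 hwb hgt hwW.1 hfa
      · -- zero rows with C i ≠ 0 : empty faces off the crossing point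
        push_neg at hrow
        obtain ⟨hArow, hCi⟩ := hrow
        set r : ℝ := -B i / C i with hrdef
        have hcross : ∀ c : ℝ, c ∈ Set.Ioo (α j) (α (j+1)) → c ≠ r := by
          intro c hc hcr
          have h0c : 0 < c := lt_of_le_of_lt hgap_lb hc.1
          have hcS : c < S := lt_of_lt_of_le hc.2 hgap_ub
          have : clip r = r := hclip_id r (by rw [← hcr]; exact h0c.le) (by rw [← hcr]; exact hcS.le)
          exact hnotgap r (this ▸ hrT i) (hcr ▸ hc)
        have hFempty : ∀ c : ℝ, c ∈ Set.Ioo (α j) (α (j+1)) → Fset A B C i c = ∅ := by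
          intro c hc
          ext x
          simp only [Fset, Set.mem_inter_iff, Set.mem_setOf_eq, Set.mem_empty_iff_false,
            iff_false, not_and]
          intro _
          have hz : A.mulVec x i = 0 := by simp [Matrix.mulVec, dotProduct, hArow]
          rw [hz]
          intro hcon
          apply hcross c hc
          rw [hrdef]
          field_simp
          linarith [hcon]
        rw [hFempty b hb, aux_vectorSpan_empty_dim]
        rw [hFempty a ha, aux_vectorSpan_empty_dim] at hfa
        exact hfa
    exact Set.ext fun i => ⟨main ε₁ ε₂ hε₁ hε₂ i, main ε₂ ε₁ hε₂ hε₁ i⟩
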